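/- Let G be a group, S ⊆ G a finite symmetric subset (S = S⁻¹), and k ≥ 3 an integer. Then (k−2)(log|S·S·S| − log|S|) ≥ log|S^k| − log|S|, where S^k denotes the set of products of k elements of S. Equivalently, |S^k| ≤ (|S·S·S|/|S|)^{k−2} |S|. -/

import Mathlib

open Pointwise

/-- **tripling controls all products.**  Let `S` be a finite nonempty
symmetric subset of a group `G` and `k ≥ 3`.  Then
`(k - 2)(log|S·S·S| - log|S|) ≥ log|S^k| - log|S|`. -/
theorem stmt19 {G : Type*} [Group G] [DecidableEq G]
    (S : Finset G) (hS : S.Nonempty) (hsym : ∀ s ∈ S, s⁻¹ ∈ S)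
    (k : ℕ) (hk : 3 ≤ k) :
    Real.log ((S ^ k).card) - Real.log S.card ≤
      ((k : ℝ) - 2) * (Real.log ((S * S * S).card) - Real.log S.card) := by
  have hScard : (0 : ℝ) < S.card := by exact_mod_cast hS.card_pos
  have hsymm : S⁻¹ = S := by
    apply Finset.Subset.antisymm
    · intro x hx
      rw [Finset.mem_inv'] at hx
      simpa using hsym _ hx
    · intro x hx
      rw [Finset.mem_inv']
      exact hsym _ hx
  set K : ℝ := ((S * S * S).card : ℝ) / S.card with hKdef
  have h3 : S ^ 3 = S * S * S := by
    rw [pow_succ, pow_two]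
  have hKS : ((S ^ 3).card : ℝ) ≤ K * S.card := by
    rw [h3, hKdef, div_mul_cancel₀]
    exact hScard.ne'
  have hmain := Finset.small_pow_of_small_tripling hk hKS hsymm
  have hpowpos : (0 : ℝ) < (S ^ k).card := by
    exact_mod_cast (hS.pow (n := k)).card_pos
  have hKpos : 0 < K := by
    have : (0 : ℝ) < (S * S * S).card := by
      exact_mod_cast ((hS.mul hS).mul hS).card_pos
    positivity
  have hlog := Real.log_le_log hpowpos hmain
  rw [Real.log_mul (by positivity) hScard.ne', Real.log_pow] at hlog
  have hcast : ((k - 2 : ℕ) : ℝ) = (k : ℝ) - 2 := by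
    have : 2 ≤ k := by omega
    push_cast [Nat.cast_sub this]
    ring
  have hKlog : Real.log K = Real.log ((S * S * S).card) - Real.log S.card :=
    Real.log_div (by positivity) hScard.ne'
  calc Real.log ((S ^ k).card) - Real.log S.card
      ≤ ((k - 2 : ℕ) : ℝ) * Real.log K := by linarith
    _ = ((k : ℝ) - 2) * (Real.log ((S * S * S).card) - Real.log S.card) := by
        rw [hcast, hKlog]
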